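/- Let κ > 0 and p ≥ 1 with κ > 1 - 1/p. Then lim_{t ↓ 0} t^{-p} ∫_0^∞ (∫_s^{t+s} y^{κ-1} e^{-y} dy)^p ds = ∫_0^∞ (s^{κ-1} e^{-s})^p ds < ∞, and consequently there exists c_p > 0 such that ∫_0^∞ (∫_s^{t+s} y^{κ-1} e^{-y} dy)^p ds ≤ c_p (min(t,1))^p for all t > 0. -/

import Mathlib

open MeasureTheory Set Filter Real Topology intervalIntegral

theorem stmt15 (κ p : ℝ) (hκ : 0 < κ) (hp : 1 ≤ p) (hκp : 1 - 1 / p < κ) :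
    MeasureTheory.IntegrableOn (fun s => (s ^ (κ - 1) * Real.exp (-s)) ^ p)
      (Set.Ioi (0:ℝ)) ∧
    Filter.Tendsto (fun t : ℝ => t ^ (-p) *
        ∫ s in Set.Ioi (0:ℝ), (∫ y in Set.Ioc s (t + s), y ^ (κ - 1) * Real.exp (-y)) ^ p)
      (nhdsWithin 0 (Set.Ioi 0))
      (nhds (∫ s in Set.Ioi (0:ℝ), (s ^ (κ - 1) * Real.exp (-s)) ^ p)) ∧
    ∃ c > 0, ∀ t : ℝ, 0 < t →
      (∫ s in Set.Ioi (0:ℝ), (∫ y in Set.Ioc s (t + s), y ^ (κ - 1) * Real.exp (-y)) ^ p)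
        ≤ c * (min t 1) ^ p := by
  have hp0 : (0:ℝ) < p := lt_of_lt_of_le one_pos hp
  set f : ℝ → ℝ := fun y => y ^ (κ - 1) * Real.exp (-y) with hf_def
  set q : ℝ := (κ - 1) * p with hq_def
  have hq : -1 < q := by
    have h1 : -(1/p) < κ - 1 := by
      have := hκp
      have h2 : 1 - 1/p < κ := hκp
      linarith
    have := mul_lt_mul_of_pos_right h1 hp0
    rwa [neg_mul, one_div, inv_mul_cancel₀ (ne_of_gt hp0)] at this
  have hκ1 : (-1:ℝ) < κ - 1 := by linarith
  -- basic facts about f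
  have hf_nonneg : ∀ y : ℝ, 0 ≤ y → 0 ≤ f y := fun y hy =>
    mul_nonneg (Real.rpow_nonneg hy _) (Real.exp_pos _).le
  have hf_meas : Measurable f := by
    simp only [hf_def]; fun_prop
  have hf_ii : ∀ a b : ℝ, IntervalIntegrable f volume a b := fun a b =>
    (intervalIntegral.intervalIntegrable_rpow' hκ1).mul_continuousOn
      ((Real.continuous_exp.comp continuous_neg).continuousOn)
  set Φ : ℝ → ℝ := fun u => ∫ y in (0:ℝ)..u, f y with hΦ_def
  have hΦc : Continuous Φ := intervalIntegral.continuous_primitive hf_ii 0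
  have hinner_eq : ∀ t s : ℝ, 0 ≤ t → (∫ y in Ioc s (t + s), f y) = Φ (t + s) - Φ s := by
    intro t s ht
    have h1 := intervalIntegral.integral_interval_sub_left (hf_ii 0 (t+s)) (hf_ii 0 s)
    rw [intervalIntegral.integral_of_le (show s ≤ t + s by linarith)] at h1
    exact h1.symm
  have hinner_nonneg : ∀ t s : ℝ, 0 < s → 0 ≤ ∫ y in Ioc s (t + s), f y := fun t s hs =>
    setIntegral_nonneg measurableSet_Ioc (fun y hy => hf_nonneg y (le_of_lt (lt_trans hs hy.1)))
  have hint_f : IntegrableOn f (Ioi 0) := by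
    have := integrableOn_rpow_mul_exp_neg_mul_rpow hκ1 zero_lt_one one_pos
    simpa [Real.rpow_one] using this
  -- integrability of the main limit integrand
  have hM : IntegrableOn (fun x : ℝ => x ^ q * Real.exp (-(p * x))) (Ioi 0) := by
    have := integrableOn_rpow_mul_exp_neg_mul_rpow hq zero_lt_one hp0
    simpa [Real.rpow_one, neg_mul] using this
  have key_eq : ∀ s : ℝ, 0 < s → (s ^ (κ-1) * Real.exp (-s)) ^ p = s ^ q * Real.exp (-(p*s)) := by
    intro s hs
    rw [Real.mul_rpow (Real.rpow_nonneg hs.le _) (Real.exp_pos _).le,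
      ← Real.rpow_mul hs.le, ← Real.exp_mul]
    rw [hq_def]; ring_nf
  have part1 : IntegrableOn (fun s : ℝ => (s ^ (κ-1) * Real.exp (-s)) ^ p) (Ioi 0) :=
    hM.congr_fun (fun s hs => (key_eq s hs).symm) measurableSet_Ioi
  -- nonnegativity of the limit integrand
  have hu_nonneg : ∀ s : ℝ, 0 < s → 0 ≤ (s ^ (κ-1) * Real.exp (-s)) ^ p := fun s hs =>
    Real.rpow_nonneg (hf_nonneg s hs.le) p
  -- integrability of the shifted integrand
  have hexp_int : IntegrableOn (fun s : ℝ => Real.exp (-(p * s))) (Ioi 0) := by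
    simpa [neg_mul] using exp_neg_integrableOn_Ioi 0 hp0
  have hkey : ∀ s : ℝ, 0 < s → (s+1) ^ q ≤ (2 ^ q + 1) * (s ^ q + 1) := by
    intro s hs
    have h2q : (0:ℝ) < 2 ^ q := Real.rpow_pos_of_pos two_pos q
    have hsq : (0:ℝ) < s ^ q := Real.rpow_pos_of_pos hs q
    rcases le_or_gt q 0 with hq0 | hq0
    · have h1 : (s+1) ^ q ≤ s ^ q := Real.rpow_le_rpow_of_nonpos hs (by linarith) hq0
      nlinarith
    · rcases le_total s 1 with hs1 | hs1
      · have h1 : (s+1) ^ q ≤ (2:ℝ) ^ q :=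
          Real.rpow_le_rpow (by linarith) (by linarith) hq0.le
        nlinarith
      · have h1 : (s+1) ^ q ≤ (2*s) ^ q :=
          Real.rpow_le_rpow (by linarith) (by linarith) hq0.le
        rw [Real.mul_rpow (by norm_num) hs.le] at h1
        nlinarith
  have key_eq' : ∀ s : ℝ, 0 < s →
      ((s+1) ^ (κ-1) * Real.exp (-s)) ^ p = (s+1) ^ q * Real.exp (-(p*s)) := by
    intro s hs
    rw [Real.mul_rpow (Real.rpow_nonneg (by linarith) _) (Real.exp_pos _).le,
      ← Real.rpow_mul (by linarith : (0:ℝ) ≤ s+1), ← Real.exp_mul]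
    rw [hq_def]; ring_nf
  have hv : IntegrableOn (fun s : ℝ => ((s+1) ^ (κ-1) * Real.exp (-s)) ^ p) (Ioi 0) := by
    have hdom : IntegrableOn
        (fun s : ℝ => (2 ^ q + 1) * (s ^ q * Real.exp (-(p*s)) + Real.exp (-(p*s)))) (Ioi 0) :=
      (hM.add hexp_int).const_mul _
    refine Integrable.mono' hdom ?_ ?_
    · exact (Measurable.aestronglyMeasurable (by fun_prop))
    · filter_upwards [self_mem_ae_restrict measurableSet_Ioi] with s hs
      have hs0 : (0:ℝ) < s := hs
      have hnn : (0:ℝ) ≤ ((s+1) ^ (κ-1) * Real.exp (-s)) ^ p :=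
        Real.rpow_nonneg (mul_nonneg (Real.rpow_nonneg (by linarith) _) (Real.exp_pos _).le) _
      rw [Real.norm_eq_abs, abs_of_nonneg hnn, key_eq' s hs0]
      have h1 := hkey s hs0
      have hE : (0:ℝ) ≤ Real.exp (-(p*s)) := (Real.exp_pos _).le
      calc (s+1) ^ q * Real.exp (-(p*s))
          ≤ ((2 ^ q + 1) * (s ^ q + 1)) * Real.exp (-(p*s)) :=
            mul_le_mul_of_nonneg_right h1 hE
        _ = (2 ^ q + 1) * (s ^ q * Real.exp (-(p*s)) + Real.exp (-(p*s))) := by ring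
  -- the dominating function
  set bound : ℝ → ℝ := fun s =>
    2 ^ p * ((s ^ (κ-1) * Real.exp (-s)) ^ p + ((s+1) ^ (κ-1) * Real.exp (-s)) ^ p) with hbound_def
  have hbound_int : IntegrableOn bound (Ioi 0) := (part1.add hv).const_mul _
  have hAB : ∀ A B : ℝ, 0 ≤ A → 0 ≤ B → (A+B) ^ p ≤ 2 ^ p * (A ^ p + B ^ p) := by
    intro A B hA hB
    have h2p : (0:ℝ) ≤ 2 ^ p := Real.rpow_nonneg (by norm_num) p
    rcases le_total A B with h | h
    · calc (A+B) ^ p ≤ (2*B) ^ p := Real.rpow_le_rpow (by linarith) (by linarith) hp0.le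
        _ = 2 ^ p * B ^ p := Real.mul_rpow (by norm_num) hB
        _ ≤ 2 ^ p * (A ^ p + B ^ p) := by nlinarith [Real.rpow_nonneg hA p]
    · calc (A+B) ^ p ≤ (2*A) ^ p := Real.rpow_le_rpow (by linarith) (by linarith) hp0.le
        _ = 2 ^ p * A ^ p := Real.mul_rpow (by norm_num) hA
        _ ≤ 2 ^ p * (A ^ p + B ^ p) := by nlinarith [Real.rpow_nonneg hB p]
  -- the main tendsto statement
  have part2 : Filter.Tendsto (fun t : ℝ => t ^ (-p) *
      ∫ s in Set.Ioi (0:ℝ), (∫ y in Set.Ioc s (t + s), f y) ^ p)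
      (nhdsWithin 0 (Set.Ioi 0))
      (nhds (∫ s in Set.Ioi (0:ℝ), (s ^ (κ - 1) * Real.exp (-s)) ^ p)) := by
    have hrw : ∀ t : ℝ, t ^ (-p) * (∫ s in Set.Ioi (0:ℝ), (∫ y in Set.Ioc s (t + s), f y) ^ p)
        = ∫ s in Set.Ioi (0:ℝ), t ^ (-p) * (∫ y in Set.Ioc s (t + s), f y) ^ p := by
      intro t
      rw [MeasureTheory.integral_const_mul]
    simp only [hrw]
    apply MeasureTheory.tendsto_integral_filter_of_dominated_convergence bound
    · -- measurability
      filter_upwards [self_mem_nhdsWithin] with t ht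
      have ht0 : (0:ℝ) < t := ht
      have heq : (fun s => t ^ (-p) * (∫ y in Ioc s (t + s), f y) ^ p)
          = fun s => t ^ (-p) * (Φ (t + s) - Φ s) ^ p :=
        funext fun s => by rw [hinner_eq t s ht0.le]
      rw [heq]
      apply Continuous.aestronglyMeasurable
      exact continuous_const.mul
        (((hΦc.comp (continuous_const.add continuous_id)).sub hΦc).rpow_const
          (fun s => Or.inr (by linarith)))
    · -- bound
      filter_upwards [Ioc_mem_nhdsGT_of_mem (show (0:ℝ) ∈ Ico 0 1 by norm_num)] with t ht
      refine (ae_restrict_iff' measurableSet_Ioi).mpr (ae_of_all _ fun s hs => ?_)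
      have hs0 : (0:ℝ) < s := hs
      have ht0 : 0 < t := ht.1
      set I := ∫ y in Ioc s (t + s), f y with hI_def
      have hI0 : 0 ≤ I := hinner_nonneg t s hs0
      set H : ℝ := (s ^ (κ-1) + (s+1) ^ (κ-1)) * Real.exp (-s) with hH_def
      have hHnn : 0 ≤ H := mul_nonneg
        (add_nonneg (Real.rpow_nonneg hs0.le _) (Real.rpow_nonneg (by linarith) _))
        (Real.exp_pos _).le
      have hIle : I ≤ t * H := by
        have h1 : I ≤ ∫ _ in Ioc s (t + s), H := by
          apply setIntegral_mono_on
            ((intervalIntegrable_iff_integrableOn_Ioc_of_le (by linarith)).mp (hf_ii s (t+s)))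
            (integrableOn_const measure_Ioc_lt_top.ne) measurableSet_Ioc
          intro y hy
          have hy1 : s < y := hy.1
          have hy2 : y ≤ t + s := hy.2
          have hexp : Real.exp (-y) ≤ Real.exp (-s) := Real.exp_le_exp.mpr (by linarith)
          have hyp : y ^ (κ-1) ≤ s ^ (κ-1) + (s+1) ^ (κ-1) := by
            rcases le_or_gt κ 1 with hκle | hκgt
            · have := Real.rpow_le_rpow_of_nonpos hs0 hy1.le (by linarith : κ - 1 ≤ 0)
              have h2 : (0:ℝ) ≤ (s+1) ^ (κ-1) := Real.rpow_nonneg (by linarith) _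
              linarith
            · have := Real.rpow_le_rpow (by linarith : (0:ℝ) ≤ y)
                (by linarith [ht.2] : y ≤ s + 1) (by linarith : (0:ℝ) ≤ κ - 1)
              have h2 : (0:ℝ) ≤ s ^ (κ-1) := Real.rpow_nonneg hs0.le _
              linarith
          calc f y = y ^ (κ-1) * Real.exp (-y) := rfl
            _ ≤ (s ^ (κ-1) + (s+1) ^ (κ-1)) * Real.exp (-s) :=
              mul_le_mul hyp hexp (Real.exp_pos _).le
                (add_nonneg (Real.rpow_nonneg hs0.le _) (Real.rpow_nonneg (by linarith) _))
        rwa [setIntegral_const, Real.volume_real_Ioc, add_sub_cancel_right,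
          max_eq_left ht0.le, smul_eq_mul] at h1
      have htp : (0:ℝ) < t ^ p := Real.rpow_pos_of_pos ht0 p
      have hnorm : ‖t ^ (-p) * I ^ p‖ = t ^ (-p) * I ^ p := by
        rw [Real.norm_eq_abs, abs_of_nonneg
          (mul_nonneg (Real.rpow_nonneg ht0.le _) (Real.rpow_nonneg hI0 _))]
      rw [hnorm]
      calc t ^ (-p) * I ^ p ≤ t ^ (-p) * (t * H) ^ p :=
            mul_le_mul_of_nonneg_left (Real.rpow_le_rpow hI0 hIle hp0.le)
              (Real.rpow_nonneg ht0.le _)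
        _ = H ^ p := by
            rw [Real.mul_rpow ht0.le hHnn, ← mul_assoc, Real.rpow_neg ht0.le,
              inv_mul_cancel₀ (ne_of_gt htp), one_mul]
        _ ≤ bound s := by
            have : H = s ^ (κ-1) * Real.exp (-s) + (s+1) ^ (κ-1) * Real.exp (-s) := by
              rw [hH_def]; ring
            rw [this]
            exact hAB _ _ (mul_nonneg (Real.rpow_nonneg hs0.le _) (Real.exp_pos _).le)
              (mul_nonneg (Real.rpow_nonneg (by linarith) _) (Real.exp_pos _).le)
    · exact hbound_int
    · -- pointwise convergence
      refine (ae_restrict_iff' measurableSet_Ioi).mpr (ae_of_all _ fun s hs => ?_)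
      have hs0 : (0:ℝ) < s := hs
      have hcf : ContinuousAt f s :=
        ((Real.continuousAt_rpow_const s (κ-1) (Or.inl (ne_of_gt hs0))).mul
          ((Real.continuous_exp.comp continuous_neg).continuousAt))
      have hderiv : HasDerivAt Φ (f s) s :=
        intervalIntegral.integral_hasDerivAt_right (hf_ii 0 s)
          ⟨univ, univ_mem, hf_meas.aestronglyMeasurable⟩ hcf
      have hslope := hasDerivAt_iff_tendsto_slope.mp hderiv
      have hmap : Tendsto (fun t : ℝ => t + s) (𝓝[>] 0) (𝓝[≠] s) := by
        rw [tendsto_nhdsWithin_iff]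
        constructor
        · have h1 : Tendsto (fun t : ℝ => t + s) (𝓝 0) (𝓝 (0 + s)) :=
            (continuous_id.add continuous_const).tendsto 0
          rw [zero_add] at h1
          exact h1.mono_left nhdsWithin_le_nhds
        · filter_upwards [self_mem_nhdsWithin] with t ht
          simp only [mem_compl_iff, mem_singleton_iff]
          intro h
          have : t = 0 := by linarith [congrArg id h]
          exact absurd this (ne_of_gt ht)
      have h1 : Tendsto (fun t : ℝ => slope Φ s (t + s)) (𝓝[>] 0) (𝓝 (f s)) :=
        hslope.comp hmap
      have hcp : ContinuousAt (fun x : ℝ => x ^ p) (f s) :=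
        Real.continuousAt_rpow_const _ _ (Or.inr (by linarith))
      have h2 : Tendsto (fun t : ℝ => (slope Φ s (t + s)) ^ p) (𝓝[>] 0)
          (𝓝 ((f s) ^ p)) := (hcp.tendsto).comp h1
      apply h2.congr'
      filter_upwards [self_mem_nhdsWithin] with t ht
      have ht0 : (0:ℝ) < t := ht
      have hIn0 : 0 ≤ ∫ y in Ioc s (t + s), f y := hinner_nonneg t s hs0
      rw [slope_def_field, hinner_eq t s ht0.le]
      rw [div_eq_mul_inv, add_sub_cancel_right, ← div_eq_mul_inv,
        ← hinner_eq t s ht0.le,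
        Real.div_rpow hIn0 ht0.le, div_eq_mul_inv, ← Real.rpow_neg ht0.le, mul_comm]
  refine ⟨part1, part2, ?_⟩
  -- Part 3
  set L : ℝ := ∫ s in Set.Ioi (0:ℝ), (s ^ (κ - 1) * Real.exp (-s)) ^ p with hL_def
  have hL0 : 0 ≤ L := setIntegral_nonneg measurableSet_Ioi (fun s hs => hu_nonneg s hs)
  -- tail bound
  have hC_int : IntegrableOn (fun y : ℝ => y ^ (κ-1) * Real.exp (-(2⁻¹ * y))) (Ioi 0) := by
    have := integrableOn_rpow_mul_exp_neg_mul_rpow hκ1 zero_lt_one (by norm_num : (0:ℝ) < 2⁻¹)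
    simpa [Real.rpow_one, neg_mul] using this
  set C : ℝ := ∫ y in Ioi (0:ℝ), y ^ (κ-1) * Real.exp (-(2⁻¹ * y)) with hC_def
  have hC0 : 0 ≤ C := setIntegral_nonneg measurableSet_Ioi (fun y hy =>
    mul_nonneg (Real.rpow_nonneg (le_of_lt hy) _) (Real.exp_pos _).le)
  have htail : ∀ s : ℝ, 0 < s → ∀ t : ℝ, 0 < t →
      (∫ y in Ioc s (t + s), f y) ≤ C * Real.exp (-(2⁻¹ * s)) := by
    intro s hs t ht
    have hfi : IntegrableOn f (Ioi s) := hint_f.mono_set (Ioi_subset_Ioi hs.le)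
    have hnn : 0 ≤ᵐ[volume.restrict (Ioi s)] f :=
      (ae_restrict_iff' measurableSet_Ioi).mpr (ae_of_all _ fun y hy =>
        hf_nonneg y (le_of_lt (lt_trans hs hy)))
    have h1 : (∫ y in Ioc s (t + s), f y) ≤ ∫ y in Ioi s, f y :=
      setIntegral_mono_set hfi hnn ((Ioc_subset_Ioi_self).eventuallyLE)
    have hgi : IntegrableOn (fun y : ℝ => Real.exp (-(2⁻¹ * s)) *
        (y ^ (κ-1) * Real.exp (-(2⁻¹ * y)))) (Ioi s) :=
      (hC_int.mono_set (Ioi_subset_Ioi hs.le)).const_mul _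
    have h2 : (∫ y in Ioi s, f y) ≤ ∫ y in Ioi s,
        Real.exp (-(2⁻¹ * s)) * (y ^ (κ-1) * Real.exp (-(2⁻¹ * y))) := by
      apply setIntegral_mono_on hfi hgi measurableSet_Ioi
      intro y hy
      have hy0 : s < y := hy
      have hexp : Real.exp (-y) ≤ Real.exp (-(2⁻¹ * s)) * Real.exp (-(2⁻¹ * y)) := by
        rw [← Real.exp_add]
        apply Real.exp_le_exp.mpr
        linarith
      calc f y = y ^ (κ-1) * Real.exp (-y) := rfl
        _ ≤ y ^ (κ-1) * (Real.exp (-(2⁻¹ * s)) * Real.exp (-(2⁻¹ * y))) :=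
          mul_le_mul_of_nonneg_left hexp (Real.rpow_nonneg (by linarith) _)
        _ = Real.exp (-(2⁻¹ * s)) * (y ^ (κ-1) * Real.exp (-(2⁻¹ * y))) := by ring
    have h3 : (∫ y in Ioi s, Real.exp (-(2⁻¹ * s)) * (y ^ (κ-1) * Real.exp (-(2⁻¹ * y))))
        = Real.exp (-(2⁻¹ * s)) * ∫ y in Ioi s, y ^ (κ-1) * Real.exp (-(2⁻¹ * y)) :=
      MeasureTheory.integral_const_mul _ _
    have h4 : (∫ y in Ioi s, y ^ (κ-1) * Real.exp (-(2⁻¹ * y))) ≤ C := by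
      apply setIntegral_mono_set hC_int
      · exact (ae_restrict_iff' measurableSet_Ioi).mpr (ae_of_all _ fun y hy =>
          mul_nonneg (Real.rpow_nonneg (le_of_lt hy) _) (Real.exp_pos _).le)
      · exact (Ioi_subset_Ioi hs.le).eventuallyLE
    calc (∫ y in Ioc s (t + s), f y) ≤ ∫ y in Ioi s, f y := h1
      _ ≤ ∫ y in Ioi s, Real.exp (-(2⁻¹ * s)) * (y ^ (κ-1) * Real.exp (-(2⁻¹ * y))) := h2
      _ = Real.exp (-(2⁻¹ * s)) * ∫ y in Ioi s, y ^ (κ-1) * Real.exp (-(2⁻¹ * y)) := h3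
      _ ≤ Real.exp (-(2⁻¹ * s)) * C :=
          mul_le_mul_of_nonneg_left h4 (Real.exp_pos _).le
      _ = C * Real.exp (-(2⁻¹ * s)) := mul_comm _ _
  have hA_int : IntegrableOn (fun s : ℝ => C ^ p * Real.exp (-(2⁻¹ * s))) (Ioi 0) := by
    apply Integrable.const_mul
    simpa [neg_mul, IntegrableOn] using exp_neg_integrableOn_Ioi 0 (by norm_num : (0:ℝ) < 2⁻¹)
  set A : ℝ := ∫ s in Ioi (0:ℝ), C ^ p * Real.exp (-(2⁻¹ * s)) with hA_def
  have hA0 : 0 ≤ A := setIntegral_nonneg measurableSet_Ioi (fun s _ =>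
    mul_nonneg (Real.rpow_nonneg hC0 _) (Real.exp_pos _).le)
  have hF_le : ∀ t : ℝ, 0 < t →
      (∫ s in Set.Ioi (0:ℝ), (∫ y in Set.Ioc s (t + s), f y) ^ p) ≤ A := by
    intro t ht
    apply MeasureTheory.integral_mono_of_nonneg
    · exact (ae_restrict_iff' measurableSet_Ioi).mpr (ae_of_all _ fun s hs =>
        Real.rpow_nonneg (hinner_nonneg t s hs) _)
    · exact hA_int
    · refine (ae_restrict_iff' measurableSet_Ioi).mpr (ae_of_all _ fun s hs => ?_)
      have hs0 : (0:ℝ) < s := hs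
      have h1 : (∫ y in Ioc s (t + s), f y) ^ p ≤ (C * Real.exp (-(2⁻¹ * s))) ^ p :=
        Real.rpow_le_rpow (hinner_nonneg t s hs0) (htail s hs0 t ht) hp0.le
      have h2 : (C * Real.exp (-(2⁻¹ * s))) ^ p
          = C ^ p * Real.exp (-(2⁻¹ * s) * p) := by
        rw [Real.mul_rpow hC0 (Real.exp_pos _).le, ← Real.exp_mul]
      have h3 : Real.exp (-(2⁻¹ * s) * p) ≤ Real.exp (-(2⁻¹ * s)) := by
        apply Real.exp_le_exp.mpr
        nlinarith
      calc (∫ y in Ioc s (t + s), f y) ^ p ≤ (C * Real.exp (-(2⁻¹ * s))) ^ p := h1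
        _ = C ^ p * Real.exp (-(2⁻¹ * s) * p) := h2
        _ ≤ C ^ p * Real.exp (-(2⁻¹ * s)) :=
            mul_le_mul_of_nonneg_left h3 (Real.rpow_nonneg hC0 _)
  -- get δ from the limit
  have hev : ∀ᶠ t in 𝓝[>] (0:ℝ), t ^ (-p) *
      (∫ s in Set.Ioi (0:ℝ), (∫ y in Set.Ioc s (t + s), f y) ^ p) < L + 1 :=
    part2.eventually_lt_const (by linarith)
  obtain ⟨δ, hδmem, hδsub⟩ := mem_nhdsGT_iff_exists_Ioc_subset.mp hev
  have hδ0 : (0:ℝ) < δ := hδmem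
  set δ' : ℝ := min δ 1 with hδ'_def
  have hδ'0 : 0 < δ' := lt_min hδ0 one_pos
  have hδ'1 : δ' ≤ 1 := min_le_right _ _
  have hδ'p : (0:ℝ) < δ' ^ p := Real.rpow_pos_of_pos hδ'0 p
  set c : ℝ := max (L + 1) (A / δ' ^ p) + 1 with hc_def
  have hcpos : 0 < c := by
    rw [hc_def]; linarith [le_max_left (L + 1) (A / δ' ^ p)]
  have hc1 : L + 1 ≤ c := by
    rw [hc_def]; linarith [le_max_left (L + 1) (A / δ' ^ p)]
  have hc2 : A / δ' ^ p ≤ c := by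
    rw [hc_def]; linarith [le_max_right (L + 1) (A / δ' ^ p)]
  refine ⟨c, hcpos, fun t ht => ?_⟩
  rcases le_or_gt t δ' with hle | hgt
  · -- small t
    have htδ : t ∈ Ioc 0 δ := ⟨ht, le_trans hle (min_le_left _ _)⟩
    have hlt := hδsub htδ
    have htp : (0:ℝ) < t ^ p := Real.rpow_pos_of_pos ht p
    have hmin : min t 1 = t := min_eq_left (le_trans hle hδ'1)
    rw [hmin]
    have heq : (∫ s in Set.Ioi (0:ℝ), (∫ y in Set.Ioc s (t + s), f y) ^ p)
        = t ^ p * (t ^ (-p) * ∫ s in Set.Ioi (0:ℝ), (∫ y in Set.Ioc s (t + s), f y) ^ p) := by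
      rw [← mul_assoc, Real.rpow_neg ht.le, mul_inv_cancel₀ (ne_of_gt htp), one_mul]
    rw [heq]
    calc t ^ p * (t ^ (-p) * ∫ s in Set.Ioi (0:ℝ), (∫ y in Set.Ioc s (t + s), f y) ^ p)
        ≤ t ^ p * (L + 1) := mul_le_mul_of_nonneg_left hlt.le htp.le
      _ ≤ t ^ p * c := mul_le_mul_of_nonneg_left hc1 htp.le
      _ = c * t ^ p := mul_comm _ _
  · -- large t
    have hmin : δ' ≤ min t 1 := le_min hgt.le hδ'1
    have hminp : δ' ^ p ≤ (min t 1) ^ p := Real.rpow_le_rpow hδ'0.le hmin hp0.le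
    have h1 : A ≤ (A / δ' ^ p) * (min t 1) ^ p := by
      have hAd : 0 ≤ A / δ' ^ p := div_nonneg hA0 hδ'p.le
      calc A = (A / δ' ^ p) * δ' ^ p := (div_mul_cancel₀ A (ne_of_gt hδ'p)).symm
        _ ≤ (A / δ' ^ p) * (min t 1) ^ p := mul_le_mul_of_nonneg_left hminp hAd
    calc (∫ s in Set.Ioi (0:ℝ), (∫ y in Set.Ioc s (t + s), f y) ^ p) ≤ A := hF_le t ht
      _ ≤ (A / δ' ^ p) * (min t 1) ^ p := h1
      _ ≤ c * (min t 1) ^ p := mul_le_mul_of_nonneg_right hc2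
          (Real.rpow_nonneg (le_min ht.le zero_le_one) p)
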